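/- Let K = {λ ∈ ℝ^{n_λ} : g(λ) ≥ 0 componentwise} for a function g : ℝ^{n_λ} → ℝ^{n_g}, and assume K is nonempty, closed and convex. Let d : ℝ^{n_λ} → ℝ be differentiable and m-strongly convex (m > 0), c > 0, and let F : ℝ^{n_x} × ℝ^{n_u} × ℝ^{n_λ} → ℝ^{n_λ} be any function. Then for all (x, u, λ): λ ∈ SOL(K, F(x, u, λ)) if and only if there exists η ∈ ℝ^{n_λ} such that F(x, u, λ) − η = 0, g(λ) ≥ 0, and φ^c(λ, η) ≤ 0. -/

import Mathlib

open scoped RealInnerProductSpace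

/-- Auchmuty's function `L^c(λ, η, ω) = c·d(λ) − c·d(ω) + ⟨η − c·∇d(λ), λ − ω⟩`. -/
noncomputable def Auchmuty {n : ℕ} (c : ℝ) (d : EuclideanSpace ℝ (Fin n) → ℝ)
    (lam eta om : EuclideanSpace ℝ (Fin n)) : ℝ :=
  c * d lam - c * d om + ⟪eta - c • gradient d lam, lam - om⟫

/-- The generalized primal gap function `φ^c(λ, η) = sup_{ω ∈ K} L^c(λ, η, ω)`. -/
noncomputable def primalGap {n : ℕ} (K : Set (EuclideanSpace ℝ (Fin n))) (c : ℝ)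
    (d : EuclideanSpace ℝ (Fin n) → ℝ) (lam eta : EuclideanSpace ℝ (Fin n)) : ℝ :=
  sSup (Auchmuty c d lam eta '' K)

private lemma auch_le {n : ℕ} {c m : ℝ} (hc : 0 < c)
    {d : EuclideanSpace ℝ (Fin n) → ℝ}
    (hstrong : ∀ x y : EuclideanSpace ℝ (Fin n),
      d x + ⟪gradient d x, y - x⟫ + m / 2 * ‖y - x‖ ^ 2 ≤ d y)
    (lam eta om : EuclideanSpace ℝ (Fin n)) :
    Auchmuty c d lam eta om ≤ ⟪eta, lam - om⟫ - c * m / 2 * ‖om - lam‖ ^ 2 := by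
  have hs := hstrong lam om
  unfold Auchmuty
  have h1 : ⟪eta - c • gradient d lam, lam - om⟫
      = ⟪eta, lam - om⟫ + c * ⟪gradient d lam, om - lam⟫ := by
    rw [inner_sub_left, real_inner_smul_left,
      show (lam - om : EuclideanSpace ℝ (Fin n)) = -(om - lam) from (neg_sub _ _).symm,
      inner_neg_right, inner_neg_right]
    ring
  rw [h1]
  nlinarith [mul_le_mul_of_nonneg_left hs hc.le]

/-- primal-gap-constraint-based reformulation of the equilibrium constraint
`λ ∈ SOL(K, F(x, u, λ))`, where `K = {λ : g(λ) ≥ 0}` is nonempty, closed and convex. -/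
theorem stmt4 {nl nx nu ng : ℕ} (hnl : 0 < nl)
    (g : EuclideanSpace ℝ (Fin nl) → Fin ng → ℝ)
    (K : Set (EuclideanSpace ℝ (Fin nl)))
    (hKdef : K = {lam | ∀ i : Fin ng, 0 ≤ g lam i})
    (hK : K.Nonempty) (hKclosed : IsClosed K) (hKconvex : Convex ℝ K)
    (d : EuclideanSpace ℝ (Fin nl) → ℝ) (m : ℝ) (hm : 0 < m)
    (hddiff : Differentiable ℝ d)
    (hstrong : ∀ x y : EuclideanSpace ℝ (Fin nl),
      d x + ⟪gradient d x, y - x⟫ + m / 2 * ‖y - x‖ ^ 2 ≤ d y)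
    (c : ℝ) (hc : 0 < c)
    (F : EuclideanSpace ℝ (Fin nx) → EuclideanSpace ℝ (Fin nu) →
      EuclideanSpace ℝ (Fin nl) → EuclideanSpace ℝ (Fin nl)) :
    ∀ (x : EuclideanSpace ℝ (Fin nx)) (u : EuclideanSpace ℝ (Fin nu))
      (lam : EuclideanSpace ℝ (Fin nl)),
      (lam ∈ K ∧ ∀ om ∈ K, 0 ≤ ⟪om - lam, F x u lam⟫) ↔
      (∃ eta : EuclideanSpace ℝ (Fin nl), F x u lam - eta = 0 ∧
        (∀ i : Fin ng, 0 ≤ g lam i) ∧ primalGap K c d lam eta ≤ 0) := by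
  intro x u lam
  constructor
  · rintro ⟨hlamK, hVI⟩
    refine ⟨F x u lam, sub_self _, by rw [hKdef] at hlamK; exact hlamK, ?_⟩
    apply Real.sSup_le _ le_rfl
    rintro r ⟨om, homK, rfl⟩
    have h1 := auch_le hc hstrong lam (F x u lam) om
    have h2 := hVI om homK
    have h3 : ⟪F x u lam, lam - om⟫ = -⟪om - lam, F x u lam⟫ := by
      rw [show (lam - om : EuclideanSpace ℝ (Fin nl)) = -(om - lam) from (neg_sub _ _).symm,
        inner_neg_right, real_inner_comm]
    nlinarith [mul_nonneg (mul_nonneg hc.le hm.le) (sq_nonneg ‖om - lam‖)]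
  · rintro ⟨eta, heta, hg, hphi⟩
    have heq : eta = F x u lam := (sub_eq_zero.mp heta).symm
    have hlamK : lam ∈ K := by rw [hKdef]; exact hg
    refine ⟨hlamK, ?_⟩
    intro om homK
    set v := om - lam with hv
    -- boundedness above of the image set
    have hbdd : BddAbove (Auchmuty c d lam eta '' K) := by
      refine ⟨‖eta‖ ^ 2 / (2 * (c * m)), ?_⟩
      rintro r ⟨w, hwK, rfl⟩
      have h1 := auch_le hc hstrong lam eta w
      have h2 : ⟪eta, lam - w⟫ ≤ ‖eta‖ * ‖lam - w‖ := real_inner_le_norm _ _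
      have h3 : ‖lam - w‖ = ‖w - lam‖ := norm_sub_rev _ _
      have hcm : 0 < c * m := mul_pos hc hm
      rw [le_div_iff₀ (by linarith : (0:ℝ) < 2 * (c * m))]
      rw [h3] at h2
      have h4 : Auchmuty c d lam eta w
          ≤ ‖eta‖ * ‖w - lam‖ - c * m / 2 * ‖w - lam‖ ^ 2 := by linarith
      nlinarith [sq_nonneg (c * m * ‖w - lam‖ - ‖eta‖),
        mul_le_mul_of_nonneg_right h4 (by linarith : (0:ℝ) ≤ 2 * (c * m))]
    -- all Auchmuty values on K are ≤ 0
    have hL : ∀ w ∈ K, Auchmuty c d lam eta w ≤ 0 := fun w hw =>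
      le_trans (le_csSup hbdd ⟨w, hw, rfl⟩) hphi
    -- the path
    have hmem : ∀ t ∈ Set.Ioc (0:ℝ) 1, lam + t • v ∈ K := by
      intro t ht
      have := hKconvex hlamK homK (by linarith [ht.1.le, ht.2] : (0:ℝ) ≤ 1 - t) ht.1.le
        (by ring)
      convert this using 1
      simp only [hv]
      module
    -- derivative of ψ t = d (lam + t • v) at 0
    have hgrad : HasGradientAt d (gradient d lam) lam := (hddiff lam).hasGradientAt
    have hline : HasDerivAt (fun t : ℝ => lam + t • v) v 0 := by
      simpa using ((hasDerivAt_id (0:ℝ)).smul_const v).const_add lam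
    have hpsi : HasDerivAt (fun t : ℝ => d (lam + t • v)) ⟪gradient d lam, v⟫ 0 := by
      have hF : HasFDerivAt d ((InnerProductSpace.toDual ℝ (EuclideanSpace ℝ (Fin nl)))
          (gradient d lam)) (lam + (0:ℝ) • v) := by
        simpa using hgrad.hasFDerivAt
      have := hF.comp_hasDerivAt 0 hline
      simp at this ⊢; exact this
    -- slope inequality on (0,1]
    have hslope : ∀ t ∈ Set.Ioc (0:ℝ) 1,
        0 ≤ c * ((d (lam + t • v) - d (lam + (0:ℝ) • v)) / (t - 0))
          + ⟪eta - c • gradient d lam, v⟫ := by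
      intro t ht
      have hLt := hL _ (hmem t ht)
      unfold Auchmuty at hLt
      have h4 : (lam - (lam + t • v) : EuclideanSpace ℝ (Fin nl)) = -(t • v) := by module
      rw [h4, inner_neg_right, real_inner_smul_right] at hLt
      have ht0 : 0 < t := ht.1
      simp only [zero_smul, add_zero, sub_zero]
      have key : 0 ≤ c * (d (lam + t • v) - d lam)
          + t * ⟪eta - c • gradient d lam, v⟫ := by nlinarith
      have h9 : c * ((d (lam + t • v) - d lam) / t) + ⟪eta - c • gradient d lam, v⟫
          = (c * (d (lam + t • v) - d lam) + t * ⟪eta - c • gradient d lam, v⟫) / t := by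
        field_simp
      rw [h9]
      exact div_nonneg key ht0.le
    -- pass to the limit t → 0⁺
    have htend : Filter.Tendsto
        (fun t : ℝ => c * ((d (lam + t • v) - d (lam + (0:ℝ) • v)) / (t - 0))
          + ⟪eta - c • gradient d lam, v⟫)
        (nhdsWithin 0 (Set.Ioi 0))
        (nhds (c * ⟪gradient d lam, v⟫ + ⟪eta - c • gradient d lam, v⟫)) := by
      have h5 := hasDerivAt_iff_tendsto_slope.mp hpsi
      have h6 : Filter.Tendsto (slope (fun t : ℝ => d (lam + t • v)) 0)
          (nhdsWithin 0 (Set.Ioi 0)) (nhds ⟪gradient d lam, v⟫) :=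
        h5.mono_left (nhdsWithin_mono _ (fun y hy => ne_of_gt hy))
      have h7 : (slope (fun t : ℝ => d (lam + t • v)) 0)
          = fun t : ℝ => (d (lam + t • v) - d (lam + (0:ℝ) • v)) / (t - 0) := by
        funext t
        simp [slope_def_field, div_eq_inv_mul]
      rw [h7] at h6
      exact ((h6.const_mul c).add tendsto_const_nhds)
    have hkey : 0 ≤ c * ⟪gradient d lam, v⟫ + ⟪eta - c • gradient d lam, v⟫ := by
      refine ge_of_tendsto htend ?_
      filter_upwards [Ioc_mem_nhdsGT_of_mem (Set.left_mem_Ico.mpr one_pos)] with t ht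
      exact hslope t ht
    have h8 : ⟪eta - c • gradient d lam, v⟫
        = ⟪eta, v⟫ - c * ⟪gradient d lam, v⟫ := by
      rw [inner_sub_left, real_inner_smul_left]
    rw [h8] at hkey
    rw [← heq, real_inner_comm]
    linarith
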